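/- Let n ≥ 4, let V be an n-dimensional real vector space with a nondegenerate symmetric bilinear form h, let 𝒮 be an h-self-adjoint endomorphism, S(X,Y) = h(X,𝒮Y), R* = (1/2) S∧S, and assume rank(S − ρ·h) = 2 for some ρ ∈ ℝ (affine 2-quasi-umbilical point). Set A = S − ρ·h, α₂ = ρ(tr(A) + (n−1)ρ), and τ = (1/2)((tr A)² − tr(A²)) + (n−2)ρ(tr A + (n−2)ρ). If τ = 0, then rank(Ric(R*) − α₂·h) ≤ 1. -/

import Mathlib

namespace OVAff

variable {V : Type*} [AddCommGroup V] [Module ℝ V]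

/-- Kulkarni–Nomizu product of two (0,2)-tensors. -/
noncomputable def KN (E F : V → V → ℝ) : V → V → V → V → ℝ := fun X₁ X₂ X₃ X₄ =>
  E X₁ X₄ * F X₂ X₃ + E X₂ X₃ * F X₁ X₄ - E X₁ X₃ * F X₂ X₄ - E X₂ X₄ * F X₁ X₃

/-- Kulkarni–Nomizu product of a (0,2)-tensor with a (0,4)-tensor. -/
noncomputable def KN4 (E : V → V → ℝ) (T : V → V → V → V → ℝ) :
    V → V → V → V → V → V → ℝ := fun X₁ X₂ X₃ X₄ Y₁ Y₂ =>
  E X₁ X₄ * T X₂ X₃ Y₁ Y₂ + E X₂ X₃ * T X₁ X₄ Y₁ Y₂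
    - E X₁ X₃ * T X₂ X₄ Y₁ Y₂ - E X₂ X₄ * T X₁ X₃ Y₁ Y₂

/-- (X ∧_A Y) Z = A(Y,Z) X − A(X,Z) Y. -/
noncomputable def wedgeVec (A : V → V → ℝ) (X Y Z : V) : V := A Y Z • X - A X Z • Y

/-- Tachibana operator Q(A,T) on a (0,2)-tensor T. -/
noncomputable def Q2 (A T : V → V → ℝ) : V → V → V → V → ℝ :=
  fun X₁ X₂ X Y => -(T (wedgeVec A X Y X₁) X₂ + T X₁ (wedgeVec A X Y X₂))

/-- Tachibana operator Q(A,T) on a (0,4)-tensor T. -/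
noncomputable def Q4 (A : V → V → ℝ) (T : V → V → V → V → ℝ) :
    V → V → V → V → V → V → ℝ := fun X₁ X₂ X₃ X₄ X Y =>
  -(T (wedgeVec A X Y X₁) X₂ X₃ X₄ + T X₁ (wedgeVec A X Y X₂) X₃ X₄
    + T X₁ X₂ (wedgeVec A X Y X₃) X₄ + T X₁ X₂ X₃ (wedgeVec A X Y X₄))

/-- The derivation B·T of a curvature operator family ℬ (with h(ℬ(X,Y)Z,W)=B(X,Y,Z,W))
acting on a (0,2)-tensor T. -/
noncomputable def dot2 (ℬ : V → V → V → V) (T : V → V → ℝ) : V → V → V → V → ℝ :=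
  fun X₁ X₂ X Y => -(T (ℬ X Y X₁) X₂ + T X₁ (ℬ X Y X₂))

/-- The derivation B·T acting on a (0,4)-tensor T. -/
noncomputable def dot4 (ℬ : V → V → V → V) (T : V → V → V → V → ℝ) :
    V → V → V → V → V → V → ℝ := fun X₁ X₂ X₃ X₄ X Y =>
  -(T (ℬ X Y X₁) X₂ X₃ X₄ + T X₁ (ℬ X Y X₂) X₃ X₄
    + T X₁ X₂ (ℬ X Y X₃) X₄ + T X₁ X₂ X₃ (ℬ X Y X₄))

/-- Ricci contraction of a (0,4)-tensor with respect to an h-orthonormal basis `e`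
with signs `ε`. -/
noncomputable def ricci {n : ℕ} (ε : Fin n → ℝ) (e : Fin n → V)
    (B : V → V → V → V → ℝ) : V → V → ℝ :=
  fun X Y => ∑ j, ε j * B (e j) X Y (e j)

/-- Scalar curvature of a (0,4)-tensor. -/
noncomputable def scal {n : ℕ} (ε : Fin n → ℝ) (e : Fin n → V)
    (B : V → V → V → V → ℝ) : ℝ :=
  ∑ j, ε j * ricci ε e B (e j) (e j)

/-- Weyl tensor of a (0,4)-tensor with respect to the metric h. -/
noncomputable def weyl {n : ℕ} (h : V → V → ℝ) (ε : Fin n → ℝ) (e : Fin n → V)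
    (B : V → V → V → V → ℝ) : V → V → V → V → ℝ := fun X₁ X₂ X₃ X₄ =>
  B X₁ X₂ X₃ X₄ - (1 / ((n : ℝ) - 2)) * KN h (ricci ε e B) X₁ X₂ X₃ X₄
    + (scal ε e B / (2 * ((n : ℝ) - 2) * ((n : ℝ) - 1))) * KN h h X₁ X₂ X₃ X₄


open Module LinearMap

-- 2x2 matrix determinant identity
private lemma mat2det (M : Matrix (Fin 2) (Fin 2) ℝ) (x : ℝ) :
    (x • (1 : Matrix (Fin 2) (Fin 2) ℝ) - M).det
      = x ^ 2 - M.trace * x + (1/2) * (M.trace ^ 2 - (M * M).trace) := by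
  simp [Matrix.det_fin_two, Matrix.trace_fin_two, Matrix.mul_apply, Fin.sum_univ_two,
    Matrix.one_apply]
  ring

private lemma det2 {W : Type*} [AddCommGroup W] [Module ℝ W] [FiniteDimensional ℝ W]
    (h2 : finrank ℝ W = 2) (B : W →ₗ[ℝ] W) (x : ℝ) :
    LinearMap.det (x • LinearMap.id - B)
      = x ^ 2 - trace ℝ W B * x
        + (1/2) * (trace ℝ W B ^ 2 - trace ℝ W (B ∘ₗ B)) := by
  let b : Basis (Fin 2) ℝ W := finBasisOfFinrankEq ℝ W h2
  rw [← LinearMap.det_toMatrix b, LinearMap.trace_eq_matrix_trace ℝ b B,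
    LinearMap.trace_eq_matrix_trace ℝ b (B ∘ₗ B)]
  rw [map_sub, map_smul, LinearMap.toMatrix_id, LinearMap.toMatrix_comp b b b B B]
  exact mat2det _ x

section basics
variable {V : Type*} [AddCommGroup V] [Module ℝ V] {n : ℕ}
  (h : LinearMap.BilinForm ℝ V)
  (e : Basis (Fin n) ℝ V) (ε : Fin n → ℝ)

-- coordinates via the metric
private lemma repr_eq (hε : ∀ j, ε j = 1 ∨ ε j = -1)
    (he : ∀ j k, h (e j) (e k) = if j = k then ε j else 0)
    (Z : V) (j : Fin n) : e.repr Z j = ε j * h (e j) Z := by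
  have hε2 : ε j * ε j = 1 := by rcases hε j with h1 | h1 <;> rw [h1] <;> norm_num
  have : h (e j) Z = e.repr Z j * ε j := by
    conv_lhs => rw [← Basis.sum_repr e Z]
    rw [map_sum]
    rw [Finset.sum_eq_single j]
    · simp [he]
    · intro k _ hk; simp [he, Ne.symm hk]
    · simp
  rw [this]
  rw [show ε j * ((e.repr Z) j * ε j) = (ε j * ε j) * (e.repr Z) j by ring, hε2, one_mul]

private lemma key_sum (hsymm : ∀ X Y, h X Y = h Y X)
    (hε : ∀ j, ε j = 1 ∨ ε j = -1)
    (he : ∀ j k, h (e j) (e k) = if j = k then ε j else 0)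
    (Z W : V) : ∑ j, ε j * (h Z (e j) * h W (e j)) = h Z W := by
  have : ∀ j, ε j * (h Z (e j) * h W (e j)) = e.repr W j * h Z (e j) := by
    intro j
    have hε2 : ε j * ε j = 1 := by rcases hε j with h1 | h1 <;> rw [h1] <;> norm_num
    rw [repr_eq h e ε hε he W j, hsymm W (e j)]
    ring
  rw [Finset.sum_congr rfl fun j _ => this j]
  conv_rhs => rw [← Basis.sum_repr e W]
  rw [map_sum]
  simp [mul_comm]

private lemma trace_formula (hε : ∀ j, ε j = 1 ∨ ε j = -1)
    (he : ∀ j k, h (e j) (e k) = if j = k then ε j else 0)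
    (F : V →ₗ[ℝ] V) : trace ℝ V F = ∑ j, ε j * h (e j) (F (e j)) := by
  classical
  rw [trace_eq_matrix_trace ℝ e F, Matrix.trace]
  apply Finset.sum_congr rfl
  intro j _
  rw [Matrix.diag_apply, LinearMap.toMatrix_apply, repr_eq h e ε hε he]

end basics

open Module LinearMap in
/-- at an affine 2-quasi-umbilical point with τ = 0 one has
rank(Ric(R*) − α₂·h) ≤ 1. -/
theorem statement9
    {V : Type*} [AddCommGroup V] [Module ℝ V]
    (n : ℕ) (hn : 4 ≤ n)
    (h : LinearMap.BilinForm ℝ V)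
    (hsymm : ∀ X Y, h X Y = h Y X)
    (hnd : ∀ X : V, (∀ Y, h X Y = 0) → X = 0)
    (e : Basis (Fin n) ℝ V) (ε : Fin n → ℝ)
    (hε : ∀ j, ε j = 1 ∨ ε j = -1)
    (he : ∀ j k, h (e j) (e k) = if j = k then ε j else 0)
    (𝒮 : V →ₗ[ℝ] V) (hsa : ∀ X Y, h (𝒮 X) Y = h X (𝒮 Y))
    (S : V → V → ℝ) (hS : S = fun X Y => h X (𝒮 Y))
    (Rstar : V → V → V → V → ℝ)
    (hRstar : Rstar = fun X₁ X₂ X₃ X₄ => (1 / 2 : ℝ) * KN S S X₁ X₂ X₃ X₄)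
    (ρ : ℝ) (𝒜 : V →ₗ[ℝ] V)
    (h𝒜 : ∀ X Y, h (𝒜 X) Y = S X Y - ρ * h X Y)
    (hrank : LinearMap.rank 𝒜 = 2)
    (α₂ τ : ℝ)
    (hα₂ : α₂ = ρ * (LinearMap.trace ℝ V 𝒜 + ((n : ℝ) - 1) * ρ))
    (hτ : τ = (1 / 2 : ℝ) * ((LinearMap.trace ℝ V 𝒜) ^ 2 - LinearMap.trace ℝ V (𝒜 ∘ₗ 𝒜))
      + ((n : ℝ) - 2) * ρ * (LinearMap.trace ℝ V 𝒜 + ((n : ℝ) - 2) * ρ))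
    (hτ0 : τ = 0) :
    ∀ 𝒞 : V →ₗ[ℝ] V,
      (∀ X Y, h (𝒞 X) Y = ricci ε (⇑e) Rstar X Y - α₂ * h X Y) →
        LinearMap.rank 𝒞 ≤ 1 := by
  intro 𝒞 h𝒞
  haveI : FiniteDimensional ℝ V := e.finiteDimensional_of_finite
  have hfr : finrank ℝ V = n := by
    rw [finrank_eq_card_basis e, Fintype.card_fin]
  -- key basis sums
  have key : ∀ Z W : V, ∑ j, ε j * (h Z (e j) * h W (e j)) = h Z W :=
    key_sum h e ε hsymm hε he
  have trform : ∀ F : V →ₗ[ℝ] V, trace ℝ V F = ∑ j, ε j * h (e j) (F (e j)) :=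
    trace_formula h e ε hε he
  -- S basics
  have hS1 : ∀ X Y, S X Y = h (𝒮 X) Y := by intro X Y; rw [hS]; exact (hsa X Y).symm
  have hSsymm : ∀ X Y, S X Y = S Y X := by
    intro X Y; rw [hS1, hS]; exact hsymm (𝒮 X) Y
  -- 𝒮 = 𝒜 + ρ id
  have h𝒮 : ∀ X, 𝒮 X = 𝒜 X + ρ • X := by
    intro X
    have : 𝒮 X - (𝒜 X + ρ • X) = 0 := by
      apply hnd
      intro Y
      have e1 : h (𝒮 X - (𝒜 X + ρ • X)) Y
          = h (𝒮 X) Y - (h (𝒜 X) Y + ρ * h X Y) := by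
        simp [map_sub, map_add, map_smul]
      rw [e1, ← hS1, h𝒜]
      ring
    exact sub_eq_zero.mp this
  set t : ℝ := trace ℝ V 𝒜 with ht
  set t2 : ℝ := trace ℝ V (𝒜 ∘ₗ 𝒜) with ht2
  set lam : ℝ := t + ((n : ℝ) - 2) * ρ with hlam
  -- trace of 𝒮
  have htr𝒮 : trace ℝ V 𝒮 = t + (n : ℝ) * ρ := by
    have : 𝒮 = 𝒜 + ρ • LinearMap.id := by
      ext X; simp [h𝒮 X]
    rw [this, map_add, map_smul, trace_id, hfr]
    simp [smul_eq_mul, mul_comm, ht]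
  -- A symmetric
  have hAsymm : ∀ X Y, h (𝒜 X) Y = h (𝒜 Y) X := by
    intro X Y; rw [h𝒜, h𝒜, hSsymm X Y, hsymm X Y]
  -- ricci formula
  have hric : ∀ X Y, ricci ε (⇑e) Rstar X Y = trace ℝ V 𝒮 * S X Y - h (𝒮 X) (𝒮 Y) := by
    intro X Y
    have expand : ∀ j, ε j * Rstar (e j) X Y (e j)
        = ε j * (S (e j) (e j)) * S X Y - ε j * (h (𝒮 X) (e j) * h (𝒮 Y) (e j)) := by
      intro j
      rw [hRstar]
      simp only [KN]
      have e1 : S (e j) Y = h (𝒮 Y) (e j) := by rw [hSsymm, hS1, hsymm]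
      have e2 : S X (e j) = h (𝒮 X) (e j) := by rw [hS1, hsymm]
      rw [e1, e2]
      ring
    rw [ricci]
    rw [Finset.sum_congr rfl fun j _ => expand j]
    rw [Finset.sum_sub_distrib, key (𝒮 X) (𝒮 Y)]
    rw [← Finset.sum_mul]
    congr 1
    rw [trform 𝒮]
    congr 1
    apply Finset.sum_congr rfl
    intro j _
    rw [hS]
  -- 𝒞 = lam • 𝒜 - 𝒜 ∘ 𝒜
  have h𝒞eq : ∀ X, 𝒞 X = lam • 𝒜 X - 𝒜 (𝒜 X) := by
    intro X
    have : 𝒞 X - (lam • 𝒜 X - 𝒜 (𝒜 X)) = 0 := by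
      apply hnd
      intro Y
      have e1 : h (𝒞 X - (lam • 𝒜 X - 𝒜 (𝒜 X))) Y
          = h (𝒞 X) Y - (lam * h (𝒜 X) Y - h (𝒜 (𝒜 X)) Y) := by
        simp [map_sub, map_add, map_smul]
      rw [e1, h𝒞, hric]
      -- expand everything in terms of h(𝒜X)Y, h(𝒜𝒜X)Y, h X Y
      have eS : S X Y = h (𝒜 X) Y + ρ * h X Y := by rw [h𝒜]; ring
      have e𝒮X : 𝒮 X = 𝒜 X + ρ • X := h𝒮 X
      have e2 : h (𝒮 X) (𝒮 Y) = h (𝒜 (𝒜 X)) Y + 2 * ρ * h (𝒜 X) Y + ρ ^ 2 * h X Y := by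
        rw [h𝒮 X, h𝒮 Y]
        have expand : h (𝒜 X + ρ • X) (𝒜 Y + ρ • Y)
            = h (𝒜 X) (𝒜 Y) + ρ * h (𝒜 X) Y + ρ * h X (𝒜 Y) + ρ * (ρ * h X Y) := by
          simp [map_add, map_smul]
          ring
        rw [expand]
        have e3 : h (𝒜 X) (𝒜 Y) = h (𝒜 (𝒜 X)) Y := by
          rw [hsymm (𝒜 X) (𝒜 Y), hAsymm Y (𝒜 X)]
        have e4 : h X (𝒜 Y) = h (𝒜 X) Y := by
          rw [hsymm X (𝒜 Y), hAsymm Y X]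
        rw [e3, e4]
        ring
      rw [eS, e2, htr𝒮, hα₂, hlam]
      ring
    exact sub_eq_zero.mp this
  -- range of 𝒜 and restriction
  set W : Submodule ℝ V := LinearMap.range 𝒜 with hW
  have hW2 : finrank ℝ W = 2 := by
    have : (finrank ℝ W : Cardinal) = 2 := by
      rw [finrank_eq_rank]; exact hrank
    exact_mod_cast this
  have hinv : ∀ x ∈ W, 𝒜 x ∈ W := fun x _ => LinearMap.mem_range_self 𝒜 x
  set B' : W →ₗ[ℝ] W := 𝒜.restrict hinv with hB'
  set g : V →ₗ[ℝ] W := 𝒜.rangeRestrict with hg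
  have hig : ∀ y : V, (W.subtype ∘ₗ g) y = 𝒜 y := fun y => rfl
  have h𝒜eq : 𝒜 = W.subtype ∘ₗ g := by ext y; exact (hig y).symm
  have hB'1 : B' = g ∘ₗ W.subtype := by
    ext w
    exact rfl
  have htrB' : trace ℝ W B' = t := by
    rw [hB'1, trace_comp_comm' W.subtype g, ← h𝒜eq]
  have htrB'2 : trace ℝ W (B' ∘ₗ B') = t2 := by
    rw [hB'1]
    have : (g ∘ₗ W.subtype) ∘ₗ g ∘ₗ W.subtype = g ∘ₗ (W.subtype ∘ₗ g ∘ₗ W.subtype) := by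
      rw [LinearMap.comp_assoc]
    rw [this, trace_comp_comm' (W.subtype ∘ₗ g ∘ₗ W.subtype) g]
    have h2 : (W.subtype ∘ₗ g ∘ₗ W.subtype) ∘ₗ g = 𝒜 ∘ₗ 𝒜 := LinearMap.ext fun y => rfl
    rw [h2]
  -- determinant vanishes
  have hdet : LinearMap.det (lam • LinearMap.id - B') = 0 := by
    rw [det2 hW2 B' lam, htrB', htrB'2]
    have h2 := hτ.symm.trans hτ0
    linear_combination h2 + lam * hlam
  -- nonzero kernel vector
  have hker : LinearMap.ker (lam • LinearMap.id - B') ≠ ⊥ :=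
    (LinearMap.bot_lt_ker_of_det_eq_zero hdet).ne'
  obtain ⟨w, hwk, hw0⟩ := (Submodule.ne_bot_iff _).mp hker
  have hwv : 𝒜 (w : V) = lam • (w : V) := by
    have : lam • w - B' w = 0 := by
      have := hwk
      rw [LinearMap.mem_ker] at this
      simpa using this
    have hBw : B' w = lam • w := by
      rw [← sub_eq_zero]; rw [← neg_sub]; simp [this]
    have := congrArg (Subtype.val) hBw
    simpa [hB'] using this
  -- D : W →ₗ V
  set f : V →ₗ[ℝ] V := lam • LinearMap.id - 𝒜 with hf
  set D : W →ₗ[ℝ] V := f.domRestrict W with hD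
  have hwD : (⟨(w : V), w.2⟩ : W) ∈ LinearMap.ker D := by
    rw [LinearMap.mem_ker]
    simp [hD, hf, hwv]
  have hrange : LinearMap.range 𝒞 ≤ LinearMap.range D := by
    rintro _ ⟨x, rfl⟩
    refine ⟨⟨𝒜 x, LinearMap.mem_range_self 𝒜 x⟩, ?_⟩
    simp [hD, hf, h𝒞eq x]
  -- rank bound
  have hkerpos : 1 ≤ finrank ℝ (LinearMap.ker D) := by
    by_contra hc
    push_neg at hc
    interval_cases hc' : finrank ℝ (LinearMap.ker D)
    · have : LinearMap.ker D = ⊥ := Submodule.finrank_eq_zero.mp hc'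
      rw [this] at hwD
      simp at hwD
      exact hw0 hwD
  have hrn : finrank ℝ (LinearMap.range D) + finrank ℝ (LinearMap.ker D) = finrank ℝ W :=
    LinearMap.finrank_range_add_finrank_ker D
  have hr1 : finrank ℝ (LinearMap.range D) ≤ 1 := by omega
  calc LinearMap.rank 𝒞 = Module.rank ℝ (LinearMap.range 𝒞) := rfl
    _ ≤ Module.rank ℝ (LinearMap.range D) := Submodule.rank_mono hrange
    _ = (finrank ℝ (LinearMap.range D) : Cardinal) := (finrank_eq_rank ℝ _).symm
    _ ≤ 1 := by exact_mod_cast hr1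


end OVAff
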